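/- For the matrices U₁ = [[0,1],[λ−2q₁,0]] and U₂ = [[−p₃, λ+q₁],[λ²−q₁λ+q₁²−2q₂, p₃]] viewed along solutions of the n=3 Stäckel flows X₁ (with times x) and X₂ (with time t₂) of Example 1, the zero-curvature condition d/dt₂ U₁ − d/dx U₂ + [U₁,U₂] = 0 holds identically as a polynomial in λ. -/

import Mathlib

/-- Directional derivative of a scalar function on ℝ⁶ along a vector field X. -/
noncomputable def dirDeriv (X : (Fin 6 → ℝ) → (Fin 6 → ℝ))
    (f : (Fin 6 → ℝ) → ℝ) (ξ : Fin 6 → ℝ) : ℝ :=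
  fderiv ℝ f ξ (X ξ)

lemma dirDeriv_master (X : (Fin 6 → ℝ) → (Fin 6 → ℝ)) (ξ : Fin 6 → ℝ)
    (a b c d e : ℝ) :
    dirDeriv X (fun η => a + b * η 0 + c * η 1 + d * η 5 + e * (η 0 * η 0)) ξ
      = b * X ξ 0 + c * X ξ 1 + d * X ξ 5 + e * (2 * ξ 0 * X ξ 0) := by
  have hp0 : HasFDerivAt (fun η : Fin 6 → ℝ => η 0)
      (ContinuousLinearMap.proj (R := ℝ) (φ := fun _ : Fin 6 => ℝ) 0) ξ :=
    hasFDerivAt_apply 0 ξ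
  have hp1 : HasFDerivAt (fun η : Fin 6 → ℝ => η 1)
      (ContinuousLinearMap.proj (R := ℝ) (φ := fun _ : Fin 6 => ℝ) 1) ξ :=
    hasFDerivAt_apply 1 ξ
  have hp5 : HasFDerivAt (fun η : Fin 6 → ℝ => η 5)
      (ContinuousLinearMap.proj (R := ℝ) (φ := fun _ : Fin 6 => ℝ) 5) ξ :=
    hasFDerivAt_apply 5 ξ
  have h := ((((hasFDerivAt_const a ξ).add (hp0.const_mul b)).add (hp1.const_mul c)).add
      (hp5.const_mul d)).add ((hp0.mul hp0).const_mul e)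
  have h' : HasFDerivAt (fun η : Fin 6 → ℝ => a + b * η 0 + c * η 1 + d * η 5 + e * (η 0 * η 0)) _ ξ := h
  rw [dirDeriv, h'.fderiv]
  simp
  ring

theorem stmt8 (c : ℝ)
    (X1 X2 : (Fin 6 → ℝ) → (Fin 6 → ℝ))
    (hX1 : X1 = fun ξ =>
      let q1 := ξ 0; let q2 := ξ 1; let q3 := ξ 2
      let p1 := ξ 3; let p2 := ξ 4; let p3 := ξ 5
      ![2*p3,
        2*q1*p3 + 2*p2,
        2*q1*p2 + 2*q2*p3 + 2*p1,
        -2*p2*p3 - 5*q1^4 + 12*q1^2*q2 - 6*q1*q3 - 3*q2^2 - c,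
        -p3^2 + 4*q1^3 - 6*q1*q2 + 2*q3,
        -3*q1^2 + 2*q2])
    (hX2 : X2 = fun ξ =>
      let q1 := ξ 0; let q2 := ξ 1; let q3 := ξ 2
      let p1 := ξ 3; let p2 := ξ 4; let p3 := ξ 5
      ![2*p2 + 2*q1*p3,
        2*p1 + 2*q1^2*p3 + 4*q1*p2,
        2*q1*p1 + 2*(q1*q2 - q3)*p3 + 2*q1^2*p2,
        -2*p1*p3 - 2*p2^2 - 4*q1*p2*p3 - q2*p3^2 + 6*q1*q2^2 - 4*q1^3*q2 + 3*q1^2*q3 - 4*q2*q3,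
        -q1*p3^2 - q1^4 + 6*q1^2*q2 - 4*q1*q3 - 3*q2^2 - c,
        p3^2 + q1^3 - 4*q1*q2 + 2*q3])
    (U1 U2 : ℝ → (Fin 6 → ℝ) → Matrix (Fin 2) (Fin 2) ℝ)
    (hU1 : U1 = fun lam ξ => !![0, 1; lam - 2 * ξ 0, 0])
    (hU2 : U2 = fun lam ξ =>
      !![-(ξ 5), lam + ξ 0;
         lam^2 - ξ 0 * lam + (ξ 0)^2 - 2 * ξ 1, ξ 5]) :
    ∀ (lam : ℝ) (ξ : Fin 6 → ℝ),
      (Matrix.of fun i j =>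
          dirDeriv X2 (fun η => U1 lam η i j) ξ - dirDeriv X1 (fun η => U2 lam η i j) ξ)
        + (U1 lam ξ * U2 lam ξ - U2 lam ξ * U1 lam ξ) = 0 := by
  subst hU1 hU2
  intro lam ξ
  have hz : ∀ X : (Fin 6 → ℝ) → (Fin 6 → ℝ), ∀ r : ℝ,
      dirDeriv X (fun _ => r) ξ = 0 := by
    intro X r
    have := dirDeriv_master X ξ r 0 0 0 0
    simpa using this
  have h1 : dirDeriv X2 (fun η => lam - 2 * η 0) ξ = -2 * X2 ξ 0 := by
    rw [show (fun η : Fin 6 → ℝ => lam - 2 * η 0)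
        = (fun η => lam + (-2) * η 0 + 0 * η 1 + 0 * η 5 + 0 * (η 0 * η 0))
        from funext fun η => by ring, dirDeriv_master]
    ring
  have h2 : dirDeriv X1 (fun η => -(η 5)) ξ = -(X1 ξ 5) := by
    rw [show (fun η : Fin 6 → ℝ => -(η 5))
        = (fun η => (0:ℝ) + 0 * η 0 + 0 * η 1 + (-1) * η 5 + 0 * (η 0 * η 0))
        from funext fun η => by ring, dirDeriv_master]
    ring
  have h3 : dirDeriv X1 (fun η => lam + η 0) ξ = X1 ξ 0 := by
    rw [show (fun η : Fin 6 → ℝ => lam + η 0)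
        = (fun η => lam + 1 * η 0 + 0 * η 1 + 0 * η 5 + 0 * (η 0 * η 0))
        from funext fun η => by ring, dirDeriv_master]
    ring
  have h4 : dirDeriv X1 (fun η => lam^2 - η 0 * lam + (η 0)^2 - 2 * η 1) ξ
      = -lam * X1 ξ 0 - 2 * X1 ξ 1 + 2 * ξ 0 * X1 ξ 0 := by
    rw [show (fun η : Fin 6 → ℝ => lam^2 - η 0 * lam + (η 0)^2 - 2 * η 1)
        = (fun η => lam^2 + (-lam) * η 0 + (-2) * η 1 + 0 * η 5 + 1 * (η 0 * η 0))
        from funext fun η => by ring, dirDeriv_master]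
    ring
  have h5 : dirDeriv X1 (fun η => η 5) ξ = X1 ξ 5 := by
    rw [show (fun η : Fin 6 → ℝ => η 5)
        = (fun η => (0:ℝ) + 0 * η 0 + 0 * η 1 + 1 * η 5 + 0 * (η 0 * η 0))
        from funext fun η => by ring, dirDeriv_master]
    ring
  have k10 : X1 ξ 0 = 2 * ξ 5 := by rw [hX1]; rfl
  have k11 : X1 ξ 1 = 2 * ξ 0 * ξ 5 + 2 * ξ 4 := by rw [hX1]; rfl
  have k15 : X1 ξ 5 = -3 * (ξ 0)^2 + 2 * ξ 1 := by rw [hX1]; rfl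
  have k20 : X2 ξ 0 = 2 * ξ 4 + 2 * ξ 0 * ξ 5 := by rw [hX2]; rfl
  ext i j
  fin_cases i <;> fin_cases j <;>
    simp only [Matrix.add_apply, Matrix.sub_apply, Matrix.mul_apply, Matrix.of_apply,
      Fin.sum_univ_two, Matrix.cons_val', Matrix.cons_val_zero, Matrix.cons_val_one,
      Matrix.head_cons, Matrix.head_fin_const, Matrix.empty_val', Matrix.cons_val_fin_one,
      Matrix.zero_apply, Fin.isValue, Fin.mk_zero, Fin.mk_one] <;>
    simp only [hz, h1, h2, h3, h4, h5, k10, k11, k15, k20] <;> ring
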